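/- If λ₁ ≥ λ₂ ≥ ⋯ ≥ λₙ are real numbers with ∑ᵢ arctan λᵢ ≥ (n−2)π/2 + δ for some δ > 0, then ∑ᵢ λᵢ ≥ 0. -/

import Mathlib

open Real Finset

theorem stmt2 (n : ℕ) (hn : 2 ≤ n) (lam : Fin n → ℝ) (hmono : Antitone lam)
    (δ : ℝ) (hδ : 0 < δ)
    (hsum : ((n : ℝ) - 2) * (π / 2) + δ ≤ ∑ i, Real.arctan (lam i)) :
    0 ≤ ∑ i, lam i := by
  set i : Fin n := ⟨n - 2, by omega⟩ with hi
  set j : Fin n := ⟨n - 1, by omega⟩ with hj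
  have hij : i ≠ j := Fin.ne_of_val_ne (by simp only [hi, hj]; omega)
  have hsub : ({i, j} : Finset (Fin n)) ⊆ univ := subset_univ _
  have hsplit : ∀ f : Fin n → ℝ,
      ∑ k, f k = f i + f j + ∑ k ∈ univ \ {i, j}, f k := by
    intro f
    rw [← Finset.sum_sdiff hsub, Finset.sum_pair hij]
    ring
  have hcard : (univ \ ({i, j} : Finset (Fin n))).card = n - 2 := by
    rw [Finset.card_sdiff_of_subset hsub, Finset.card_pair hij, Finset.card_univ, Fintype.card_fin]
  have hrest : ∑ k ∈ univ \ ({i, j} : Finset (Fin n)), Real.arctan (lam k)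
      ≤ ((n : ℝ) - 2) * (π / 2) := by
    calc ∑ k ∈ univ \ ({i, j} : Finset (Fin n)), Real.arctan (lam k)
        ≤ (univ \ ({i, j} : Finset (Fin n))).card • (π / 2) := by
          apply Finset.sum_le_card_nsmul
          intro k _
          exact (Real.arctan_lt_pi_div_two _).le
      _ = ((n : ℝ) - 2) * (π / 2) := by
          rw [hcard, nsmul_eq_mul, Nat.cast_sub hn]
          norm_num
  have hkey : δ ≤ Real.arctan (lam i) + Real.arctan (lam j) := by
    have := hsplit (fun k => Real.arctan (lam k))
    rw [this] at hsum
    linarith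
  have hpos : 0 < lam i + lam j := by
    by_contra h
    push_neg at h
    have hle : lam j ≤ -lam i := by linarith
    have : Real.arctan (lam j) ≤ Real.arctan (-lam i) := Real.arctan_strictMono.monotone hle
    rw [Real.arctan_neg] at this
    linarith
  have hji : i ≤ j := by
    simp only [hi, hj, Fin.mk_le_mk]
    omega
  have hiipos : 0 < lam i := by
    have := hmono hji
    linarith
  have hfinal := hsplit lam
  rw [hfinal]
  have hrestpos : 0 ≤ ∑ k ∈ univ \ ({i, j} : Finset (Fin n)), lam k := by
    apply Finset.sum_nonneg
    intro k hk
    simp only [Finset.mem_sdiff, Finset.mem_insert, Finset.mem_singleton] at hk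
    have hki : k ≤ i := by
      have h1 : k.val ≠ n - 2 := fun h => hk.2 (Or.inl (Fin.ext h))
      have h2 : k.val ≠ n - 1 := fun h => hk.2 (Or.inr (Fin.ext h))
      have := k.isLt
      simp only [hi, Fin.le_def]
      omega
    have := hmono hki
    linarith
  linarith
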